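/- Let p be a prime and let (B_j)_{j∈ℕ}, B_j = B(a_j, p^{−n_j}), be a sequence of pairwise disjoint closed balls in ℚ_p with ∑_j p^{−n_j} < ∞, with metric boundary β = ⋃_j S(a_j, p^{−n_j}) and thick inner ε-neighborhoods N_ε. Then the volume of the thin inner ε-neighborhood satisfies, for every ε > 0: V(ε) := μ_H(N_ε \ β) = p^{−1} · ∑_{j : p^{−n_j} < ε} p^{−n_j}. -/

import Mathlib

open MeasureTheory

noncomputable instance padicMeasurableSpace (p : ℕ) [Fact p.Prime] : MeasurableSpace ℚ_[p] :=
  borel _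

instance padicBorelSpace (p : ℕ) [Fact p.Prime] : BorelSpace ℚ_[p] := ⟨rfl⟩

/-- The closed unit ball `ℤ_p = {x : ℚ_p | |x|_p ≤ 1}` of `ℚ_p`, as a positive compact set. -/
noncomputable def padicUnitBall (p : ℕ) [Fact p.Prime] :
    TopologicalSpace.PositiveCompacts ℚ_[p] where
  carrier := Metric.closedBall 0 1
  isCompact' := isCompact_closedBall 0 1
  interior_nonempty' :=
    ⟨0, mem_interior_iff_mem_nhds.mpr (Metric.closedBall_mem_nhds 0 one_pos)⟩

/-- The Haar measure `μ_H` on the additive group `ℚ_p`, normalized so that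
`μ_H(ℤ_p) = 1`. -/
noncomputable def padicHaar (p : ℕ) [Fact p.Prime] : Measure ℚ_[p] :=
  Measure.addHaarMeasure (padicUnitBall p)
open ENNReal

variable (p : ℕ) [Fact p.Prime]


lemma haar_unit : padicHaar p (Metric.closedBall 0 1) = 1 :=
  Measure.addHaarMeasure_self (K₀ := padicUnitBall p)

instance : (padicHaar p).IsAddLeftInvariant := by
  unfold padicHaar; infer_instance

lemma haar_translate (c : ℚ_[p]) (s : Set ℚ_[p]) :
    padicHaar p ((fun x => c + x) '' s) = padicHaar p s := by
  rw [Set.image_add_left]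
  exact measure_preimage_add _ _ _

variable {p : ℕ} [hp : Fact p.Prime]

lemma padic_ball_decomp (k : ℤ) :
    Metric.closedBall (0:ℚ_[p]) ((p:ℝ)^(k+1)) =
      ⋃ c : Fin p, Metric.closedBall ((c:ℚ_[p]) * (p:ℚ_[p])^(-(k+1))) ((p:ℝ)^k) := by
  have hp0 : (0:ℝ) < p := by exact_mod_cast hp.out.pos
  have hp1 : (1:ℝ) ≤ p := by exact_mod_cast hp.out.one_lt.le
  have hpne : (p:ℚ_[p]) ≠ 0 := by exact_mod_cast hp.out.ne_zero
  ext x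
  simp only [Metric.mem_closedBall, dist_eq_norm, sub_zero, Set.mem_iUnion]
  constructor
  · intro hx
    have hz : ‖x * (p:ℚ_[p])^(k+1)‖ ≤ 1 := by
      rw [norm_mul, Padic.norm_p_zpow]
      calc ‖x‖ * (p:ℝ)^(-(k+1)) ≤ (p:ℝ)^(k+1) * (p:ℝ)^(-(k+1)) := by
            apply mul_le_mul_of_nonneg_right hx (le_of_lt (zpow_pos hp0 _))
        _ = 1 := by rw [← zpow_add₀ (ne_of_gt hp0), add_neg_cancel, zpow_zero]
    set w : ℤ_[p] := ⟨x * (p:ℚ_[p])^(k+1), hz⟩ with hw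
    refine ⟨⟨w.appr 1, by simpa using w.appr_lt 1⟩, ?_⟩
    have hspec := w.appr_spec 1
    rw [← PadicInt.norm_le_pow_iff_mem_span_pow] at hspec
    have hnorm : ‖(w : ℚ_[p]) - (w.appr 1 : ℚ_[p])‖ ≤ (p:ℝ)^(-(1:ℤ)) := by
      have h2 : ((w - (w.appr 1 : ℤ_[p]) : ℤ_[p]) : ℚ_[p]) = (w : ℚ_[p]) - (w.appr 1 : ℚ_[p]) := by
        push_cast; ring
      rw [← h2, PadicInt.padic_norm_e_of_padicInt]
      exact_mod_cast hspec
    have key : x - (w.appr 1 : ℚ_[p]) * (p:ℚ_[p])^(-(k+1)) =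
        ((w : ℚ_[p]) - (w.appr 1 : ℚ_[p])) * (p:ℚ_[p])^(-(k+1)) := by
      have hx' : x = (w : ℚ_[p]) * (p:ℚ_[p])^(-(k+1)) := by
        rw [hw]; show x = x * (p:ℚ_[p])^(k+1) * (p:ℚ_[p])^(-(k+1)) ; 
        rw [mul_assoc, ← zpow_add₀ hpne]
        have h3 : k + 1 + -(k+1) = 0 := by ring
        rw [h3, zpow_zero, mul_one]
      rw [hx']; ring
    simp only [Fin.val_mk]
    rw [key, norm_mul, Padic.norm_p_zpow]
    calc ‖(w : ℚ_[p]) - (w.appr 1 : ℚ_[p])‖ * (p:ℝ)^(-(-(k+1)))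
        ≤ (p:ℝ)^(-(1:ℤ)) * (p:ℝ)^(k+1) := by
          rw [neg_neg]
          apply mul_le_mul_of_nonneg_right hnorm (le_of_lt (zpow_pos hp0 _))
      _ = (p:ℝ)^k := by rw [← zpow_add₀ (ne_of_gt hp0)]; norm_num
  · rintro ⟨c, hc⟩
    have h1 : ‖(c:ℚ_[p]) * (p:ℚ_[p])^(-(k+1))‖ ≤ (p:ℝ)^(k+1) := by
      rw [norm_mul, Padic.norm_p_zpow, neg_neg]
      calc ‖((c:ℕ):ℚ_[p])‖ * (p:ℝ)^(k+1) ≤ 1 * (p:ℝ)^(k+1) := by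
            apply mul_le_mul_of_nonneg_right _ (le_of_lt (zpow_pos hp0 _))
            exact_mod_cast Padic.norm_int_le_one ((c:ℕ):ℤ)
        _ = (p:ℝ)^(k+1) := one_mul _
    calc ‖x‖ = ‖(x - (c:ℚ_[p]) * (p:ℚ_[p])^(-(k+1))) + (c:ℚ_[p]) * (p:ℚ_[p])^(-(k+1))‖ := by
          ring_nf
      _ ≤ max ‖x - (c:ℚ_[p]) * (p:ℚ_[p])^(-(k+1))‖ ‖(c:ℚ_[p]) * (p:ℚ_[p])^(-(k+1))‖ :=
          Padic.nonarchimedean _ _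
      _ ≤ (p:ℝ)^(k+1) := max_le
          (le_trans hc (zpow_le_zpow_right₀ hp1 (by linarith))) h1

lemma padic_ball_decomp_disjoint (k : ℤ) :
    Pairwise (Function.onFun Disjoint
      (fun c : Fin p => Metric.closedBall ((c:ℚ_[p]) * (p:ℚ_[p])^(-(k+1))) ((p:ℝ)^k))) := by
  have hp0 : (0:ℝ) < p := by exact_mod_cast hp.out.pos
  intro c c' hne
  rw [Function.onFun, Set.disjoint_left]
  intro x hx hx'
  simp only [Metric.mem_closedBall, dist_eq_norm] at hx hx'
  have hdiff : ‖((c':ℚ_[p]) - (c:ℚ_[p])) * (p:ℚ_[p])^(-(k+1))‖ ≤ (p:ℝ)^k := by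
    have heq : ((c':ℚ_[p]) - (c:ℚ_[p])) * (p:ℚ_[p])^(-(k+1)) =
        (x - (c:ℚ_[p]) * (p:ℚ_[p])^(-(k+1))) - (x - (c':ℚ_[p]) * (p:ℚ_[p])^(-(k+1))) := by ring
    rw [heq, sub_eq_add_neg]
    refine le_trans (Padic.nonarchimedean _ _) ?_
    rw [norm_neg]
    exact max_le hx hx'
  rw [norm_mul, Padic.norm_p_zpow, neg_neg] at hdiff
  have hlt : ‖((c':ℚ_[p]) - (c:ℚ_[p]))‖ < 1 := by
    have hppos : (0:ℝ) < (p:ℝ)^(k+1) := zpow_pos hp0 _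
    have h5 : ‖((c':ℚ_[p]) - (c:ℚ_[p]))‖ ≤ (p:ℝ)^k / (p:ℝ)^(k+1) :=
      (le_div_iff₀ hppos).mpr hdiff
    have h6 : (p:ℝ)^k / (p:ℝ)^(k+1) = (p:ℝ)^(-1:ℤ) := by
      rw [div_eq_mul_inv, ← zpow_neg, ← zpow_add₀ (ne_of_gt hp0)]
      norm_num
    rw [h6] at h5
    refine lt_of_le_of_lt h5 ?_
    rw [zpow_neg_one, inv_lt_one₀ hp0]
    exact_mod_cast hp.out.one_lt
  have hcast : ((c':ℚ_[p]) - (c:ℚ_[p])) = (((c':ℤ) - (c:ℤ) : ℤ) : ℚ_[p]) := by push_cast; ring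
  rw [hcast, Padic.norm_intCast_lt_one_iff] at hlt
  have hd : p ∣ ((c':ℤ) - (c:ℤ)).natAbs := Int.natCast_dvd_natCast.mp (Int.dvd_natAbs.mpr hlt)
  have h1 := c.isLt
  have h2 := c'.isLt
  have h7 : ((c':ℤ) - (c:ℤ)).natAbs < p := by omega
  have h8 : ((c':ℤ) - (c:ℤ)).natAbs = 0 := by
    rcases Nat.eq_zero_or_pos ((c':ℤ) - (c:ℤ)).natAbs with h | h
    · exact h
    · exact absurd (Nat.le_of_dvd h hd) (not_le.mpr h7)
  exact hne (Fin.ext (by omega)).symm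


lemma padicHaar_closedBall_center (c : ℚ_[p]) (r : ℝ) :
    padicHaar p (Metric.closedBall c r) = padicHaar p (Metric.closedBall 0 r) := by
  have h : Metric.closedBall c r = (fun x => -c + x) ⁻¹' Metric.closedBall 0 r := by
    ext x
    simp [Metric.mem_closedBall, dist_eq_norm, neg_add_eq_sub]
  rw [h, measure_preimage_add]

lemma padicHaar_closedBall_zero (k : ℤ) :
    padicHaar p (Metric.closedBall (0:ℚ_[p]) ((p:ℝ)^k)) = ENNReal.ofReal ((p:ℝ)^k) := by
  have hp0 : (0:ℝ) < p := by exact_mod_cast hp.out.pos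
  have hpe : (p:ℝ≥0∞) ≠ 0 := by exact_mod_cast hp.out.ne_zero
  have hpt : (p:ℝ≥0∞) ≠ ⊤ := ENNReal.natCast_ne_top p
  have step : ∀ k : ℤ, padicHaar p (Metric.closedBall (0:ℚ_[p]) ((p:ℝ)^(k+1)))
      = p * padicHaar p (Metric.closedBall (0:ℚ_[p]) ((p:ℝ)^k)) := by
    intro k
    rw [padic_ball_decomp k, measure_iUnion (padic_ball_decomp_disjoint k)
      (fun c => measurableSet_closedBall)]
    have : ∀ c : Fin p, padicHaar p
        (Metric.closedBall ((c:ℚ_[p]) * (p:ℚ_[p])^(-(k+1))) ((p:ℝ)^k))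
        = padicHaar p (Metric.closedBall (0:ℚ_[p]) ((p:ℝ)^k)) := fun c =>
      padicHaar_closedBall_center _ _
    rw [tsum_congr this, tsum_fintype]
    simp [Finset.sum_const, Finset.card_univ, mul_comm, nsmul_eq_mul]
  have ofr : ∀ k : ℤ, ENNReal.ofReal ((p:ℝ)^(k+1)) = p * ENNReal.ofReal ((p:ℝ)^k) := by
    intro k
    rw [zpow_add₀ (ne_of_gt hp0), zpow_one, mul_comm, ENNReal.ofReal_mul (by positivity)]
    congr 1
    simp [ENNReal.ofReal_natCast]
  induction k using Int.induction_on with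
  | zero => simpa using haar_unit p
  | succ k ih => rw [step, ih, ofr]
  | pred k ih =>
    have h1 := step (-(k:ℤ)-1)
    have h2 : (-(k:ℤ)-1) + 1 = -(k:ℤ) := by ring
    rw [h2, ih] at h1
    have h3 := ofr (-(k:ℤ)-1)
    rw [h2] at h3
    exact (ENNReal.mul_right_inj hpe hpt).mp (h1.symm.trans h3)

lemma padicHaar_closedBall (c : ℚ_[p]) (k : ℤ) :
    padicHaar p (Metric.closedBall c ((p:ℝ)^k)) = ENNReal.ofReal ((p:ℝ)^k) := by
  rw [padicHaar_closedBall_center, padicHaar_closedBall_zero]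

lemma padicHaar_ball (c : ℚ_[p]) (k : ℤ) :
    padicHaar p (Metric.ball c ((p:ℝ)^k)) = ENNReal.ofReal ((p:ℝ)^(k-1)) := by
  have h : Metric.ball c ((p:ℝ)^k) = Metric.closedBall c ((p:ℝ)^(k-1)) := by
    ext x
    simp only [Metric.mem_ball, Metric.mem_closedBall, dist_eq_norm]
    exact Padic.norm_lt_pow_iff_norm_le_pow_sub_one _ _
  rw [h, padicHaar_closedBall]

/-- For a p-adic fractal string given by pairwise disjoint closed balls
`B_j = B(a_j, p^{-n_j})` with summable lengths, metric boundary `β` and thick inner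
ε-neighborhoods `N_ε`, the volume of the thin inner ε-neighborhood satisfies
`V(ε) = μ_H(N_ε \ β) = p⁻¹ · ∑_{j : p^{-n_j} < ε} p^{-n_j}` for every `ε > 0`. -/
theorem padic_volume_thin_inner_tube (p : ℕ) [Fact p.Prime]
    (a : ℕ → ℚ_[p]) (n : ℕ → ℤ)
    (hdisj : Pairwise fun i j =>
      Disjoint (Metric.closedBall (a i) ((p : ℝ) ^ (-n i)))
        (Metric.closedBall (a j) ((p : ℝ) ^ (-n j))))
    (hsum : Summable fun j => (p : ℝ) ^ (-n j))
    (ε : ℝ) (hε : 0 < ε) :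
    padicHaar p
        ({x ∈ ⋃ j, Metric.closedBall (a j) ((p : ℝ) ^ (-n j)) |
            Metric.infDist x (⋃ j, Metric.sphere (a j) ((p : ℝ) ^ (-n j))) < ε}
          \ ⋃ j, Metric.sphere (a j) ((p : ℝ) ^ (-n j)))
      = ENNReal.ofReal
          ((p : ℝ)⁻¹ * ∑' j : {j : ℕ // (p : ℝ) ^ (-n j) < ε}, (p : ℝ) ^ (-n j.1)) := by
  have hp0 : (0:ℝ) < p := by exact_mod_cast (Fact.out : p.Prime).pos
  set S : Set ℚ_[p] := ⋃ j, Metric.sphere (a j) ((p : ℝ) ^ (-n j)) with hS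
  have hrpos : ∀ j, (0:ℝ) < (p:ℝ) ^ (-n j) := fun j => zpow_pos hp0 _
  -- spheres contain explicit points
  have hsph : ∀ j, a j + (p:ℚ_[p]) ^ (n j) ∈ Metric.sphere (a j) ((p:ℝ) ^ (-n j)) := by
    intro j
    simp [Metric.mem_sphere, dist_eq_norm, Padic.norm_p_zpow]
  have hSne : S.Nonempty := ⟨a 0 + (p:ℚ_[p]) ^ (n 0), Set.mem_iUnion.mpr ⟨0, hsph 0⟩⟩
  -- claim 1 : points of the open ball j are at distance ≥ p^{-n j} from S
  have claim1 : ∀ j x, x ∈ Metric.ball (a j) ((p:ℝ) ^ (-n j)) →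
      ∀ y ∈ S, (p:ℝ) ^ (-n j) ≤ dist x y := by
    intro j x hx y hy
    by_contra hcon
    push_neg at hcon
    rw [Metric.mem_ball] at hx
    have hyj : y ∈ Metric.closedBall (a j) ((p:ℝ) ^ (-n j)) := by
      rw [Metric.mem_closedBall]
      calc dist y (a j) ≤ max (dist y x) (dist x (a j)) := dist_triangle_max y x (a j)
        _ ≤ (p:ℝ) ^ (-n j) := max_le (le_of_lt (dist_comm y x ▸ hcon)) (le_of_lt hx)
    rcases Set.mem_iUnion.mp hy with ⟨i, hi⟩
    rcases eq_or_ne i j with rfl | hij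
    · rw [Metric.mem_sphere] at hi
      rw [Metric.mem_closedBall] at hyj
      have : dist y (a i) < (p:ℝ) ^ (-n i) :=
        lt_of_le_of_lt (dist_triangle_max y x (a i))
          (max_lt (dist_comm y x ▸ hcon) hx)
      exact absurd hi (ne_of_lt this)
    · exact Set.disjoint_left.mp (hdisj hij) (Metric.sphere_subset_closedBall hi) hyj
  -- claim 2 : open ball j avoids S
  have claim2 : ∀ j x, x ∈ Metric.ball (a j) ((p:ℝ) ^ (-n j)) → x ∉ S := by
    intro j x hx hxS
    have := claim1 j x hx x hxS
    simp only [dist_self] at this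
    exact absurd this (not_le.mpr (hrpos j))
  -- claim 3 : open ball j has infDist to S at most p^{-n j}
  have claim3 : ∀ j x, x ∈ Metric.ball (a j) ((p:ℝ) ^ (-n j)) →
      Metric.infDist x S ≤ (p:ℝ) ^ (-n j) := by
    intro j x hx
    refine le_trans (Metric.infDist_le_dist_of_mem
      (Set.mem_iUnion.mpr ⟨j, hsph j⟩)) ?_
    rw [Metric.mem_ball] at hx
    calc dist x (a j + (p:ℚ_[p]) ^ (n j))
        ≤ max (dist x (a j)) (dist (a j) (a j + (p:ℚ_[p]) ^ (n j))) :=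
          dist_triangle_max _ _ _
      _ ≤ (p:ℝ) ^ (-n j) := by
          apply max_le (le_of_lt hx)
          rw [dist_comm]
          exact le_of_eq (hsph j)
  -- the set identity
  have hset : {x ∈ ⋃ j, Metric.closedBall (a j) ((p : ℝ) ^ (-n j)) |
      Metric.infDist x S < ε} \ S
      = ⋃ j : {j : ℕ // (p : ℝ) ^ (-n j) < ε},
          Metric.ball (a j.1) ((p:ℝ) ^ (-n j.1)) := by
    ext x
    constructor
    · rintro ⟨⟨hxB, hxd⟩, hxS⟩
      rcases Set.mem_iUnion.mp hxB with ⟨j, hj⟩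
      have hxj : x ∈ Metric.ball (a j) ((p:ℝ) ^ (-n j)) := by
        rw [Metric.mem_ball]
        rcases lt_or_eq_of_le (Metric.mem_closedBall.mp hj) with h | h
        · exact h
        · exact absurd (Set.mem_iUnion.mpr ⟨j, Metric.mem_sphere.mpr h⟩) hxS
      rcases (Metric.infDist_lt_iff hSne).mp hxd with ⟨y, hyS, hyd⟩
      have hjε : (p:ℝ) ^ (-n j) < ε := lt_of_le_of_lt (claim1 j x hxj y hyS) hyd
      exact Set.mem_iUnion.mpr ⟨⟨j, hjε⟩, hxj⟩
    · intro hx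
      rcases Set.mem_iUnion.mp hx with ⟨⟨j, hjε⟩, hxj⟩
      refine ⟨⟨Set.mem_iUnion.mpr ⟨j, Metric.ball_subset_closedBall hxj⟩, ?_⟩, claim2 j x hxj⟩
      exact lt_of_le_of_lt (claim3 j x hxj) hjε
  rw [hset]
  -- measure computation
  have hm : padicHaar p (⋃ j : {j : ℕ // (p : ℝ) ^ (-n j) < ε},
        Metric.ball (a j.1) ((p:ℝ) ^ (-n j.1)))
      = ∑' j : {j : ℕ // (p : ℝ) ^ (-n j) < ε},
          padicHaar p (Metric.ball (a j.1) ((p:ℝ) ^ (-n j.1))) := by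
    apply measure_iUnion
    · intro i j hij
      have hij' : (i : ℕ) ≠ (j : ℕ) := fun h => hij (Subtype.ext h)
      exact (hdisj hij').mono Metric.ball_subset_closedBall Metric.ball_subset_closedBall
    · exact fun j => measurableSet_ball
  rw [hm]
  have hball : ∀ j : {j : ℕ // (p : ℝ) ^ (-n j) < ε},
      padicHaar p (Metric.ball (a j.1) ((p:ℝ) ^ (-n j.1)))
        = ENNReal.ofReal ((p:ℝ)⁻¹ * (p:ℝ) ^ (-n j.1)) := by
    intro j
    rw [padicHaar_ball (a j.1) (-n j.1)]
    congr 1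
    rw [← zpow_neg_one, ← zpow_add₀ (ne_of_gt hp0)]
    congr 1
    ring
  rw [tsum_congr hball]
  rw [← ENNReal.ofReal_tsum_of_nonneg]
  · congr 1
    rw [← tsum_mul_left]
  · intro j
    positivity
  · exact (hsum.subtype _).mul_left _
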